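/- Let F₄ be the finite field with four elements. A function f : F₄ × F₄ → F₄ satisfying f(x,y) = f(y,x) for all x, y is a local permutation polynomial over F₄ if and only if there exist s₀₀, s₁₀, s₁₁, s₂₀, s₂₁, s₂₂ ∈ F₄ satisfying s₁₀³ + s₂₀³ = 1, s₁₁(s₂₂³ + 1) = 0, s₂₁(s₂₂³ + 1) = 0, s₂₀s₂₁ + s₁₀s₂₂ + s₂₂² = 0 and s₁₁s₂₁ + s₂₂² = 0, such that f(x,y) = (s₂₂xy + s₂₁(x+y) + s₁₁)xy + s₂₀(x² + y²) + s₁₀(x+y) + s₀₀ for all x, y. -/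

import Mathlib

/-- The field with four elements. -/
abbrev F₄ : Type := GaloisField 2 2

/-- `f : F × F → F` is a local permutation polynomial if both sections
`x ↦ f (x, a)` and `x ↦ f (a, x)` are bijections of `F` for every `a`. -/
def IsLPP {F : Type*} (f : F × F → F) : Prop :=
  ∀ a : F, Function.Bijective (fun x => f (x, a)) ∧ Function.Bijective (fun x => f (a, x))


inductive F4c : Type
  | O | I | X | Y
  deriving DecidableEq

instance : Fintype F4c :=
  ⟨⟨↑[F4c.O, F4c.I, F4c.X, F4c.Y], by decide⟩, fun x => by cases x <;> decide⟩

namespace F4c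

def add : F4c → F4c → F4c
  | O, x => x
  | x, O => x
  | I, I => O | I, X => Y | I, Y => X
  | X, I => Y | X, X => O | X, Y => I
  | Y, I => X | Y, X => I | Y, Y => O

def mul : F4c → F4c → F4c
  | O, _ => O
  | _, O => O
  | I, x => x
  | x, I => x
  | X, X => Y | X, Y => I
  | Y, X => I | Y, Y => X

def inv : F4c → F4c
  | O => O | I => I | X => Y | Y => X

instance : Zero F4c := ⟨O⟩
instance : One F4c := ⟨I⟩
instance : Add F4c := ⟨add⟩
instance : Mul F4c := ⟨mul⟩
instance : Neg F4c := ⟨id⟩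
instance : Inv F4c := ⟨inv⟩

instance : CommRing F4c where
  add_assoc := by decide
  zero_add := by decide
  add_zero := by decide
  add_comm := by decide
  neg_add_cancel := by decide
  mul_assoc := by decide
  one_mul := by decide
  mul_one := by decide
  mul_comm := by decide
  left_distrib := by decide
  right_distrib := by decide
  zero_mul := by decide
  mul_zero := by decide
  nsmul := nsmulRec
  zsmul := zsmulRec

instance : Field F4c where
  exists_pair_ne := ⟨O, I, by decide⟩
  mul_inv_cancel := by decide
  inv_zero := by decide
  nnqsmul := _
  qsmul := _

-- interpolation
lemma Ldelta (a x : F4c) : x^3 + a*x^2 + a^2*x + a^3 + 1 = if x = a then 1 else 0 := by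
  revert a x; decide

lemma interp1 (g : F4c → F4c) (x : F4c) :
    g x = ∑ a, g a * (x^3 + a*x^2 + a^2*x + a^3 + 1) := by
  simp [Ldelta, mul_ite]

lemma expand1 (g : F4c → F4c) (x : F4c) :
    ∑ a, g a * (x^3 + a*x^2 + a^2*x + a^3 + 1) =
    (∑ a, g a) * x^3 + (∑ a, g a * a) * x^2 + (∑ a, g a * a^2) * x
      + (∑ a, g a * (a^3 + 1)) := by
  rw [Finset.sum_mul, Finset.sum_mul, Finset.sum_mul,
    ← Finset.sum_add_distrib, ← Finset.sum_add_distrib, ← Finset.sum_add_distrib]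
  exact Finset.sum_congr rfl fun a _ => by ring

lemma sumzero (h : F4c → F4c) (hb : Function.Bijective h) : ∑ a, h a = 0 := by
  have := Function.Bijective.sum_comp hb (fun z => z)
  rw [this]
  decide

lemma cubic_of_sumzero (g : F4c → F4c) (h0 : ∑ a, g a = 0) (x : F4c) :
    g x = (∑ a, g a * a) * x^2 + (∑ a, g a * a^2) * x + (∑ a, g a * (a^3 + 1)) := by
  rw [interp1 g x, expand1, h0, zero_mul, zero_add]


lemma L2 (A B C : F4c) :
    Function.Bijective (fun x => A * x^2 + B * x + C) ↔ A^3 + B^3 = 1 := by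
  revert A B C; decide

lemma L1 (s₁₀ s₁₁ s₂₀ s₂₁ s₂₂ : F4c) :
    (∀ a : F4c, (s₂₂*a^2 + s₂₁*a + s₂₀)^3 + (s₂₁*a^2 + s₁₁*a + s₁₀)^3 = 1) ↔
      (s₁₀ ^ 3 + s₂₀ ^ 3 = 1 ∧
        s₁₁ * (s₂₂ ^ 3 + 1) = 0 ∧
        s₂₁ * (s₂₂ ^ 3 + 1) = 0 ∧
        s₂₀ * s₂₁ + s₁₀ * s₂₂ + s₂₂ ^ 2 = 0 ∧
        s₁₁ * s₂₁ + s₂₂ ^ 2 = 0) := by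
  revert s₁₀ s₁₁ s₂₀ s₂₁ s₂₂; decide

end F4c

open F4c in
/-- the right-hand-side shape, over any commutative ring -/
def rhsForm {R : Type*} [CommRing R] (f : R × R → R) : Prop :=
  ∃ s₀₀ s₁₀ s₁₁ s₂₀ s₂₁ s₂₂ : R,
    s₁₀ ^ 3 + s₂₀ ^ 3 = 1 ∧
    s₁₁ * (s₂₂ ^ 3 + 1) = 0 ∧
    s₂₁ * (s₂₂ ^ 3 + 1) = 0 ∧
    s₂₀ * s₂₁ + s₁₀ * s₂₂ + s₂₂ ^ 2 = 0 ∧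
    s₁₁ * s₂₁ + s₂₂ ^ 2 = 0 ∧
    ∀ x y, f (x, y) =
      (s₂₂ * x * y + s₂₁ * (x + y) + s₁₁) * x * y +
        s₂₀ * (x ^ 2 + y ^ 2) + s₁₀ * (x + y) + s₀₀

namespace F4c

lemma swapS (f : F4c × F4c → F4c) (hsym : ∀ x y : F4c, f (x, y) = f (y, x))
    (u w : F4c → F4c) :
    ∑ b, (∑ a, f (a, b) * u a) * w b = ∑ b, (∑ a, f (a, b) * w a) * u b := by
  simp only [Finset.sum_mul]
  rw [Finset.sum_comm]
  refine Finset.sum_congr rfl fun a _ => Finset.sum_congr rfl fun b _ => ?_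
  rw [hsym]; ring

theorem thmA (f : F4c × F4c → F4c) (hsym : ∀ x y : F4c, f (x, y) = f (y, x)) :
    IsLPP f ↔ rhsForm f := by
  constructor
  · intro hL
    -- row/column sums vanish
    have rowbij : ∀ b : F4c, Function.Bijective (fun x => f (x, b)) := fun b => (hL b).1
    have colbij : ∀ a : F4c, Function.Bijective (fun x => f (a, x)) := fun a => (hL a).2
    have rowsum : ∀ b : F4c, ∑ a, f (a, b) = 0 := fun b => sumzero _ (rowbij b)
    have colsum : ∀ a : F4c, ∑ b, f (a, b) = 0 := fun a => sumzero _ (colbij a)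
    set P : F4c → F4c := fun y => ∑ a, f (a, y) * a with hP
    set Q : F4c → F4c := fun y => ∑ a, f (a, y) * a^2 with hQ
    set R : F4c → F4c := fun y => ∑ a, f (a, y) * (a^3 + 1) with hR
    have h1 : ∀ x y : F4c, f (x, y) = P y * x^2 + Q y * x + R y := fun x y =>
      cubic_of_sumzero (fun u => f (u, y)) (rowsum y) x
    have sumaux : ∀ u : F4c → F4c, ∑ y, ∑ a, f (a, y) * u a = 0 := by
      intro u
      rw [Finset.sum_comm]
      refine Finset.sum_eq_zero fun a _ => ?_
      rw [← Finset.sum_mul, colsum a, zero_mul]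
    have hP0 : ∑ y, P y = 0 := sumaux _
    have hQ0 : ∑ y, Q y = 0 := sumaux _
    have hR0 : ∑ y, R y = 0 := sumaux _
    have hPe := cubic_of_sumzero P hP0
    have hQe := cubic_of_sumzero Q hQ0
    have hRe := cubic_of_sumzero R hR0
    -- name the nine coefficients
    set p2 := ∑ a, P a * a with hp2
    set p1 := ∑ a, P a * a^2 with hp1
    set p0 := ∑ a, P a * (a^3+1) with hp0
    set q2 := ∑ a, Q a * a with hq2
    set q1 := ∑ a, Q a * a^2 with hq1
    set q0 := ∑ a, Q a * (a^3+1) with hq0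
    set r2 := ∑ a, R a * a with hr2
    set r1 := ∑ a, R a * a^2 with hr1
    set r0 := ∑ a, R a * (a^3+1) with hr0
    -- symmetry identifications
    have e1 : q2 = p1 := by rw [hq2, hp1, hP, hQ]; exact swapS f hsym _ _
    have e2 : r2 = p0 := by rw [hr2, hp0, hP, hR]; exact swapS f hsym _ _
    have e3 : r1 = q0 := by rw [hr1, hq0, hQ, hR]; exact swapS f hsym _ _
    have hform : ∀ x y : F4c, f (x, y) =
        (p2 * x * y + p1 * (x + y) + q1) * x * y +
          p0 * (x ^ 2 + y ^ 2) + q0 * (x + y) + r0 := by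
      intro x y
      rw [h1 x y, hPe y, hQe y, hRe y, e1, e2, e3]
      ring
    -- sections are quadratics, hence constraints
    have hAB : ∀ a : F4c, (p2*a^2 + p1*a + p0)^3 + (p1*a^2 + q1*a + q0)^3 = 1 := by
      intro a
      have : (fun x => f (x, a)) =
          fun x => (p2*a^2 + p1*a + p0) * x^2 + (p1*a^2 + q1*a + q0) * x
            + (p0*a^2 + q0*a + r0) := by
        funext x; rw [hform x a]; ring
      exact (L2 _ _ _).mp (this ▸ rowbij a)
    obtain ⟨c1, c2, c3, c4, c5⟩ := (L1 q0 q1 p0 p1 p2).mp hAB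
    exact ⟨r0, q0, q1, p0, p1, p2, c1, c2, c3, c4, c5, hform⟩
  · rintro ⟨s₀₀, s₁₀, s₁₁, s₂₀, s₂₁, s₂₂, c1, c2, c3, c4, c5, hform⟩
    have hAB := (L1 s₁₀ s₁₁ s₂₀ s₂₁ s₂₂).mpr ⟨c1, c2, c3, c4, c5⟩
    intro a
    have hsec : (fun x => f (x, a)) =
        fun x => (s₂₂*a^2 + s₂₁*a + s₂₀) * x^2 + (s₂₁*a^2 + s₁₁*a + s₁₀) * x
          + (s₂₀*a^2 + s₁₀*a + s₀₀) := by
      funext x; rw [hform x a]; ring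
    have hbij : Function.Bijective (fun x => f (x, a)) := by
      rw [hsec]; exact (L2 _ _ _).mpr (hAB a)
    refine ⟨hbij, ?_⟩
    have : (fun x => f (a, x)) = fun x => f (x, a) := by funext x; rw [hsym]
    rw [this]; exact hbij

end F4c

section Transfer

lemma isLPP_pullback {α β : Type*} (e : α ≃ β) (f : β × β → β) :
    IsLPP (fun p => e.symm (f (e p.1, e p.2))) → IsLPP f := by
  intro h a
  obtain ⟨h1, h2⟩ := h (e.symm a)
  constructor
  · have hx : (fun x => f (x, a)) =
        e ∘ (fun u => e.symm (f (e u, e (e.symm a)))) ∘ e.symm := by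
      funext x; simp
    rw [hx]
    exact (e.bijective.comp h1).comp e.symm.bijective
  · have hx : (fun x => f (a, x)) =
        e ∘ (fun u => e.symm (f (e (e.symm a), e u))) ∘ e.symm := by
      funext x; simp
    rw [hx]
    exact (e.bijective.comp h2).comp e.symm.bijective

lemma isLPP_pullback_iff {α β : Type*} (e : α ≃ β) (f : β × β → β) :
    IsLPP (fun p => e.symm (f (e p.1, e p.2))) ↔ IsLPP f := by
  refine ⟨isLPP_pullback e f, fun hf => isLPP_pullback e.symm _ ?_⟩
  have hx : (fun p : β × β => e.symm.symm
      ((fun p : α × α => e.symm (f (e p.1, e p.2))) (e.symm p.1, e.symm p.2))) = f := by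
    funext p; simp
  rw [hx]; exact hf

lemma rhsForm_pullback {R S : Type*} [CommRing R] [CommRing S] (e : R ≃+* S)
    (f : S × S → S) :
    rhsForm (fun p => e.symm (f (e p.1, e p.2))) → rhsForm f := by
  rintro ⟨s₀₀, s₁₀, s₁₁, s₂₀, s₂₁, s₂₂, c1, c2, c3, c4, c5, hform⟩
  refine ⟨e s₀₀, e s₁₀, e s₁₁, e s₂₀, e s₂₁, e s₂₂, ?_, ?_, ?_, ?_, ?_, ?_⟩
  · simpa using congrArg e c1
  · simpa using congrArg e c2
  · simpa using congrArg e c3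
  · simpa using congrArg e c4
  · simpa using congrArg e c5
  · intro x y
    have h := congrArg e (hform (e.symm x) (e.symm y))
    simpa using h

lemma rhsForm_pullback_iff {R S : Type*} [CommRing R] [CommRing S] (e : R ≃+* S)
    (f : S × S → S) :
    rhsForm (fun p => e.symm (f (e p.1, e p.2))) ↔ rhsForm f := by
  refine ⟨rhsForm_pullback e f, fun hf => rhsForm_pullback e.symm _ ?_⟩
  have hx : (fun p : S × S => e.symm.symm
      ((fun p : R × R => e.symm (f (e p.1, e p.2))) (e.symm p.1, e.symm p.2))) = f := by
    funext p; simp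
  rw [hx]; exact hf

end Transfer

instance : CharP F4c 2 :=
  (CharP.charP_iff_prime_eq_zero Nat.prime_two).mpr (by decide)

instance : Algebra (ZMod 2) F4c := ZMod.algebra F4c 2

noncomputable def equivF4 : F4c ≃+* GaloisField 2 2 :=
  (GaloisField.algEquivGaloisFieldOfFintype 2 2
    (by decide : Fintype.card F4c = 2 ^ 2)).toRingEquiv

theorem stmt_5' (f : GaloisField 2 2 × GaloisField 2 2 → GaloisField 2 2)
    (hsym : ∀ x y, f (x, y) = f (y, x)) : IsLPP f ↔ rhsForm f := by
  set e := equivF4 with he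
  set g : F4c × F4c → F4c := fun p => e.symm (f (e p.1, e p.2)) with hg
  have hgsym : ∀ x y : F4c, g (x, y) = g (y, x) := by
    intro x y; simp only [hg]; rw [hsym]
  rw [← isLPP_pullback_iff e.toEquiv f, ← rhsForm_pullback_iff e f]
  exact F4c.thmA g hgsym

/-- A symmetric function `f : F₄ × F₄ → F₄` is an LPP over `F₄`
if and only if it has the stated polynomial form with coefficients satisfying
the five listed constraints. -/
theorem stmt_5 (f : F₄ × F₄ → F₄) (hsym : ∀ x y : F₄, f (x, y) = f (y, x)) :
    IsLPP f ↔
      ∃ s₀₀ s₁₀ s₁₁ s₂₀ s₂₁ s₂₂ : F₄,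
        s₁₀ ^ 3 + s₂₀ ^ 3 = 1 ∧
        s₁₁ * (s₂₂ ^ 3 + 1) = 0 ∧
        s₂₁ * (s₂₂ ^ 3 + 1) = 0 ∧
        s₂₀ * s₂₁ + s₁₀ * s₂₂ + s₂₂ ^ 2 = 0 ∧
        s₁₁ * s₂₁ + s₂₂ ^ 2 = 0 ∧
        ∀ x y : F₄, f (x, y) =
          (s₂₂ * x * y + s₂₁ * (x + y) + s₁₁) * x * y +
            s₂₀ * (x ^ 2 + y ^ 2) + s₁₀ * (x + y) + s₀₀ := by
  exact stmt_5' f hsym
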